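/- arXiv:2106.11672 — 6 statements merged into one kernel-verified Lean document; each statement's English description precedes it below -/
import Mathlib

section
/- For every natural number n ≥ 2 there exists a sequence of permutations π₀, π₁, …, π_{n−2} of Fin n with π₀ = id such that: (i) for each t < n−2 the permutation π_{t+1} ∘ π_t⁻¹ is a product of pairwise-disjoint transpositions, each of which exchanges two adjacent positions i and i+1; (ii) for every pair of distinct elements x ≠ y of Fin n there exists some t ≤ n−2 with |(π_t x : ℤ) − (π_t y : ℤ)| = 1; and (iii) the total number of transpositions used across all n−2 steps equals (n−1)(n−2)/2. (That is, the complete interaction graph can be simulated on a line of n qudits using n−2 layers of parallel nearest-neighbour swaps and (n−1)(n−2)/2 swaps in total.) -/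
open Finset

/-- One brick-wall layer, acting on position values: at step `t`, positions of
parity `t % 2` swap with their right neighbour (when it exists). -/
def gnat (n t p : ℕ) : ℕ :=
  if p % 2 = t % 2 then (if p + 1 < n then p + 1 else p)
  else (if p = 0 then p else p - 1)

lemma gnat_lt {n p : ℕ} (t : ℕ) (h : p < n) : gnat n t p < n := by
  unfold gnat; split_ifs <;> omega

lemma gnat_gnat {n p : ℕ} (t : ℕ) (h : p < n) : gnat n t (gnat n t p) = p := by
  unfold gnat; split_ifs <;> first | contradiction | omega

/-- The layer as a permutation of `Fin n`. -/
def Lp (n t : ℕ) : Equiv.Perm (Fin n) :=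
  Function.Involutive.toPerm (fun p => ⟨gnat n t p.val, gnat_lt t p.isLt⟩)
    (fun p => Fin.ext (gnat_gnat t p.isLt))

/-- The swap network: compose the layers. -/
def piSeq (n : ℕ) : ℕ → Equiv.Perm (Fin n)
  | 0 => 1
  | t + 1 => Lp n t * piSeq n t

lemma piSeq_succ (n t : ℕ) : piSeq n (t + 1) * (piSeq n t)⁻¹ = Lp n t := by
  show (Lp n t * piSeq n t) * (piSeq n t)⁻¹ = Lp n t
  rw [mul_inv_cancel_right]

/-- Reflected (billiard with pauses) trajectory function, period `2n`. -/
def fref (n x : ℕ) : ℕ := if x % (2*n) < n then x % (2*n) else 2*n - 1 - x % (2*n)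

/-- Starting phase of token `k`. -/
def astart (n k : ℕ) : ℕ := if k % 2 = 0 then k else 2*n - 1 - k

lemma fref_w1 {n x : ℕ} (h : x < n) : fref n x = x := by
  have h2 : x % (2*n) = x := Nat.mod_eq_of_lt (by omega)
  unfold fref; rw [h2, if_pos h]

lemma fref_w2 {n x : ℕ} (h1 : n ≤ x) (h2 : x < 2*n) : fref n x = 2*n - 1 - x := by
  have h3 : x % (2*n) = x := Nat.mod_eq_of_lt h2
  unfold fref; rw [h3, if_neg (by omega)]

lemma fref_w3 {n x : ℕ} (_hn : 0 < n) (h1 : 2*n ≤ x) (h2 : x < 3*n) : fref n x = x - 2*n := by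
  have h3 : x % (2*n) = x - 2*n := by
    rw [Nat.mod_eq_sub_mod h1, Nat.mod_eq_of_lt (by omega)]
  unfold fref; rw [h3, if_pos (by omega)]

/-- Key step: applying layer `t` advances the reflected trajectory by one. -/
lemma gnat_fref {n : ℕ} (hn : 2 ≤ n) (t a : ℕ) (ha : a % 2 = 0) :
    gnat n t (fref n (a + t)) = fref n (a + t + 1) := by
  have h2n : 0 < 2*n := by omega
  have hr : (a + t) % (2*n) < 2*n := Nat.mod_lt _ h2n
  have hpar : (a + t) % (2*n) % 2 = t % 2 := by
    rw [Nat.mod_mod_of_dvd _ ⟨n, by ring⟩]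
    omega
  have h1m : 1 % (2*n) = 1 := Nat.mod_eq_of_lt (by omega)
  have hsucc : (a + t + 1) % (2*n) =
      if (a + t) % (2*n) + 1 = 2*n then 0 else (a + t) % (2*n) + 1 := by
    rw [Nat.add_mod (a+t) 1, h1m]
    split_ifs with h
    · rw [h, Nat.mod_self]
    · rw [Nat.mod_eq_of_lt (by omega)]
  set r := (a + t) % (2*n) with hrdef
  rcases Nat.lt_or_ge r n with hcase | hcase
  · rcases Nat.lt_or_ge r (n-1) with hc2 | hc2
    · -- ascending, away from the wall
      have hs2 : (a + t + 1) % (2*n) = r + 1 := by rw [hsucc, if_neg (by omega)]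
      have e1 : fref n (a + t) = r := by unfold fref; rw [← hrdef, if_pos hcase]
      have e2 : fref n (a + t + 1) = r + 1 := by
        unfold fref; rw [hs2, if_pos (by omega)]
      rw [e1, e2]; unfold gnat; rw [if_pos (by omega), if_pos (by omega)]
    · -- at the right wall
      have hr2 : r = n - 1 := by omega
      have hs2 : (a + t + 1) % (2*n) = r + 1 := by rw [hsucc, if_neg (by omega)]
      have e1 : fref n (a + t) = r := by unfold fref; rw [← hrdef, if_pos hcase]
      have e2 : fref n (a + t + 1) = n - 1 := by
        unfold fref; rw [hs2, if_neg (by omega)]; omega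
      rw [e1, e2]; unfold gnat; rw [if_pos (by omega), if_neg (by omega)]
      omega
  · rcases Nat.lt_or_ge r (2*n - 1) with hc2 | hc2
    · -- descending, away from the left wall
      have hs2 : (a + t + 1) % (2*n) = r + 1 := by rw [hsucc, if_neg (by omega)]
      have e1 : fref n (a + t) = 2*n - 1 - r := by
        unfold fref; rw [← hrdef, if_neg (by omega)]
      have e2 : fref n (a + t + 1) = 2*n - 1 - (r + 1) := by
        unfold fref; rw [hs2, if_neg (by omega)]
      rw [e1, e2]; unfold gnat
      rw [if_neg (by omega), if_neg (by omega)]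
      omega
    · -- at the left wall
      have hr2 : r = 2*n - 1 := by omega
      have hs2 : (a + t + 1) % (2*n) = 0 := by rw [hsucc, if_pos (by omega)]
      have e1 : fref n (a + t) = 0 := by
        unfold fref; rw [← hrdef, if_neg (by omega)]; omega
      have e2 : fref n (a + t + 1) = 0 := by
        unfold fref; rw [hs2, if_pos (by omega)]
      rw [e1, e2]; unfold gnat
      rw [if_neg (by omega), if_pos rfl]

/-- Closed form for the token positions. -/
lemma pi_val {n : ℕ} (hn : 2 ≤ n) (t : ℕ) (k : Fin n) :
    ((piSeq n t) k).val = fref n (astart n k.val + t) := by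
  have hk := k.isLt
  induction t with
  | zero =>
    have h1 : ((piSeq n 0) k).val = k.val := rfl
    rw [h1, Nat.add_zero]
    rcases Nat.mod_two_eq_zero_or_one k.val with h | h
    · rw [show astart n k.val = k.val from if_pos h, fref_w1 hk]
    · rw [show astart n k.val = 2*n-1-k.val from if_neg (by omega),
        fref_w2 (by omega) (by omega)]
      omega
  | succ t ih =>
    have ha : astart n k.val % 2 = 0 := by
      unfold astart; split_ifs <;> omega
    have h1 : ((piSeq n (t+1)) k).val = gnat n t ((piSeq n t k).val) := rfl
    rw [h1, ih, show astart n k.val + (t+1) = astart n k.val + t + 1 by omega]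
    exact gnat_fref hn t _ ha

/-- Meeting times: any two distinct tokens are at adjacent positions at some time `≤ n-2`. -/
lemma meet {n : ℕ} (hn : 2 ≤ n) {u v : ℕ} (hu : u < n) (hv : v < n) (huv : u < v) :
    ∃ t ≤ n - 2, fref n (astart n u + t) + 1 = fref n (astart n v + t) ∨
      fref n (astart n v + t) + 1 = fref n (astart n u + t) := by
  rcases Nat.mod_two_eq_zero_or_one u with hpu | hpu <;>
    rcases Nat.mod_two_eq_zero_or_one v with hpv | hpv
  · -- both even
    refine ⟨n - 1 - (u+v)/2, by omega, ?_⟩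
    rw [show astart n u = u from if_pos hpu, show astart n v = v from if_pos hpv,
      fref_w1 (by omega), fref_w2 (by omega) (by omega)]
    left; omega
  · -- u even, v odd: they approach directly
    refine ⟨(v-u-1)/2, by omega, ?_⟩
    rw [show astart n u = u from if_pos hpu, show astart n v = 2*n-1-v from if_neg (by omega),
      fref_w1 (by omega), fref_w2 (by omega) (by omega)]
    left; omega
  · -- u odd, v even
    by_cases hvu : v = u + 1
    · refine ⟨0, by omega, ?_⟩
      rw [show astart n u = 2*n-1-u from if_neg (by omega), show astart n v = v from if_pos hpv,
        fref_w2 (by omega) (by omega), fref_w1 (by omega)]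
      left; omega
    · refine ⟨(2*n - 1 + u - v)/2, by omega, ?_⟩
      rw [show astart n u = 2*n-1-u from if_neg (by omega), show astart n v = v from if_pos hpv,
        fref_w3 (by omega) (by omega) (by omega), fref_w2 (by omega) (by omega)]
      left; omega
  · -- both odd
    refine ⟨(u+v)/2, by omega, ?_⟩
    rw [show astart n u = 2*n-1-u from if_neg (by omega),
      show astart n v = 2*n-1-v from if_neg (by omega),
      fref_w3 (by omega) (by omega) (by omega), fref_w2 (by omega) (by omega)]
    left; omega

lemma supp_eq {n : ℕ} (t : ℕ) :
    (Lp n t).support = univ.filter (fun p : Fin n => ¬ gnat n t p.val = p.val) := by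
  ext p
  simp only [Equiv.Perm.mem_support, mem_filter, mem_univ, true_and]
  constructor
  · intro h h2; exact h (Fin.ext h2)
  · intro h h2; exact h (congrArg Fin.val h2)

lemma fix_card {n : ℕ} (hn : 2 ≤ n) (t : ℕ) :
    (univ.filter (fun p : Fin n => gnat n t p.val = p.val)).card
      = (if t % 2 = 0 then 0 else 1) + (if (n-1) % 2 = t % 2 then 1 else 0) := by
  have hfix : ∀ p : Fin n, (gnat n t p.val = p.val) ↔
      ((p.val = 0 ∧ t % 2 = 1) ∨ (p.val = n-1 ∧ (n-1) % 2 = t % 2)) := by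
    intro p; have hp := p.isLt; unfold gnat; split_ifs <;> omega
  rcases Nat.mod_two_eq_zero_or_one t with ht | ht <;>
    rcases Nat.mod_two_eq_zero_or_one (n-1) with hw | hw
  · have hset : univ.filter (fun p : Fin n => gnat n t p.val = p.val)
        = {(⟨n-1, by omega⟩ : Fin n)} := by
      ext p
      simp only [mem_filter, mem_univ, true_and, mem_singleton, hfix p, Fin.ext_iff]
      omega
    rw [hset, card_singleton]
    simp [ht, hw]
  · have hset : univ.filter (fun p : Fin n => gnat n t p.val = p.val)
        = (∅ : Finset (Fin n)) := by
      ext p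
      simp only [mem_filter, mem_univ, true_and, notMem_empty, iff_false, hfix p]
      omega
    rw [hset, card_empty]
    simp [ht, hw]
  · have hset : univ.filter (fun p : Fin n => gnat n t p.val = p.val)
        = {(⟨0, by omega⟩ : Fin n)} := by
      ext p
      simp only [mem_filter, mem_univ, true_and, mem_singleton, hfix p, Fin.ext_iff]
      omega
    rw [hset, card_singleton]
    simp [ht, hw]
  · have hset : univ.filter (fun p : Fin n => gnat n t p.val = p.val)
        = {(⟨0, by omega⟩ : Fin n), (⟨n-1, by omega⟩ : Fin n)} := by
      ext p
      simp only [mem_filter, mem_univ, true_and, mem_insert, mem_singleton, hfix p,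
        Fin.ext_iff]
      omega
    rw [hset, card_pair (by simp only [ne_eq, Fin.ext_iff]; omega)]
    simp [ht, hw]

lemma layer_card {n : ℕ} (hn : 2 ≤ n) (t : ℕ) :
    (Lp n t).support.card = if t % 2 = 0 then 2*(n/2) else 2*((n-1)/2) := by
  have h3 : (univ : Finset (Fin n)).card = n := by simp
  rw [supp_eq, Finset.filter_not, Finset.card_sdiff_of_subset (Finset.filter_subset _ _), h3,
    fix_card hn t]
  rcases Nat.mod_two_eq_zero_or_one t with ht | ht <;>
    rcases Nat.mod_two_eq_zero_or_one (n-1) with hw | hw <;>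
    simp only [ht, hw] <;> norm_num <;> omega

lemma sum_alt (E O : ℕ) (m : ℕ) :
    ∑ t ∈ range m, (if t % 2 = 0 then E else O) = (m+1)/2 * E + m/2 * O := by
  induction m with
  | zero => simp
  | succ m ih =>
    rw [sum_range_succ, ih]
    rcases Nat.mod_two_eq_zero_or_one m with h | h
    · rw [if_pos h, show (m+1+1)/2 = (m+1)/2 + 1 by omega, show (m+1)/2 = m/2 by omega]
      ring
    · rw [if_neg (by omega), show (m+1+1)/2 = (m+1)/2 by omega,
        show (m+1)/2 = m/2 + 1 by omega]
      ring

/-- The complete interaction graph on `n` tokens can be simulated on a line of `n` qudits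
using `n - 2` layers of parallel nearest-neighbour swaps, with `(n-1)(n-2)/2` swaps
(i.e. transpositions) in total. A layer is encoded by requiring that
`π (t+1) * (π t)⁻¹` is an involution moving every position by at most one, which is
equivalent to it being a product of pairwise-disjoint transpositions of adjacent
positions; the total number of transpositions is half the total support, so the count
`(n-1)(n-2)/2` is stated as `∑ support.card = (n-1)*(n-2)`. -/
theorem complete_graph_on_line_upper_bound (n : ℕ) (hn : 2 ≤ n) :
    ∃ π : ℕ → Equiv.Perm (Fin n),
      π 0 = 1 ∧
      (∀ t < n - 2,
        (π (t + 1) * (π t)⁻¹) * (π (t + 1) * (π t)⁻¹) = 1 ∧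
        ∀ p : Fin n,
          |((((π (t + 1) * (π t)⁻¹) p : Fin n) : ℕ) : ℤ) - ((p : ℕ) : ℤ)| ≤ 1) ∧
      (∀ x y : Fin n, x ≠ y →
        ∃ t ≤ n - 2, |(((π t x : Fin n) : ℕ) : ℤ) - (((π t y : Fin n) : ℕ) : ℤ)| = 1) ∧
      (∑ t ∈ Finset.range (n - 2), (π (t + 1) * (π t)⁻¹).support.card
        = (n - 1) * (n - 2)) := by
  refine ⟨piSeq n, rfl, ?_, ?_, ?_⟩
  · intro t ht
    constructor
    · rw [piSeq_succ]
      apply Equiv.ext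
      intro p
      have h : (Lp n t) ((Lp n t) p) = p := Fin.ext (gnat_gnat t p.isLt)
      simpa [Equiv.Perm.mul_apply] using h
    · intro p
      rw [piSeq_succ]
      have h1 : ((Lp n t) p).val = gnat n t p.val := rfl
      have h2 : gnat n t p.val ≤ p.val + 1 ∧ p.val ≤ gnat n t p.val + 1 := by
        unfold gnat; split_ifs <;> omega
      rw [h1, abs_le]
      omega
  · intro x y hxy
    have hne : x.val ≠ y.val := fun h => hxy (Fin.ext h)
    rcases lt_or_gt_of_ne hne with h | h
    · obtain ⟨t, ht1, ht2⟩ := meet hn x.isLt y.isLt h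
      refine ⟨t, ht1, ?_⟩
      rw [pi_val hn t x, pi_val hn t y, abs_eq (by norm_num : (0:ℤ) ≤ 1)]
      omega
    · obtain ⟨t, ht1, ht2⟩ := meet hn y.isLt x.isLt h
      refine ⟨t, ht1, ?_⟩
      rw [pi_val hn t x, pi_val hn t y, abs_eq (by norm_num : (0:ℤ) ≤ 1)]
      omega
  · have hcongr : ∑ t ∈ Finset.range (n-2), (piSeq n (t+1) * (piSeq n t)⁻¹).support.card
        = ∑ t ∈ Finset.range (n-2), (if t % 2 = 0 then 2*(n/2) else 2*((n-1)/2)) := by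
      refine Finset.sum_congr rfl fun t _ => ?_
      rw [piSeq_succ, layer_card hn]
    rw [hcongr, sum_alt]
    obtain ⟨k, hk⟩ : ∃ k, n = 2*k+2 ∨ n = 2*k+3 := ⟨(n-2)/2, by omega⟩
    rcases hk with hk | hk <;> subst hk
    · rw [show 2*k+2-2+1 = 2*k+1 by omega, show 2*k+2-2 = 2*k by omega,
        show 2*k+2-1 = 2*k+1 by omega, show (2*k+1)/2 = k by omega,
        show (2*k+2)/2 = k+1 by omega, show 2*k/2 = k by omega]
      ring
    · rw [show 2*k+3-2+1 = 2*k+2 by omega, show 2*k+3-2 = 2*k+1 by omega,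
        show 2*k+3-1 = 2*k+2 by omega, show (2*k+2)/2 = k+1 by omega,
        show (2*k+3)/2 = k+1 by omega, show (2*k+1)/2 = k by omega]
      ring
end

section
/- Let n ≥ 2 and let π₀ = id, π₁, …, π_T be permutations of Fin n such that for each t < T there exist adjacent positions i, i+1 with π_{t+1} = (i i+1) ∘ π_t (each step performs a single nearest-neighbour swap). If for every pair of distinct tokens x ≠ y there exists some t ≤ T with |(π_t x : ℤ) − (π_t y : ℤ)| = 1, then 2·T ≥ n(n−1)/2 − (n−1). (Any swap protocol on a line of n qudits enabling all-to-all interactions requires at least (C(n,2) − (n−1))/2 swaps.) -/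
lemma swap_arith (i a b a' b' : ℕ)
    (ha' : a' = if a = i then i+1 else if a = i+1 then i else a)
    (hb' : b' = if b = i then i+1 else if b = i+1 then i else b)
    (hadj : |(a:ℤ) - b| = 1)
    (hnot : ¬ |(a':ℤ) - b'| = 1) :
    min a b + 1 = i ∨ min a b = i + 1 := by
  rw [abs_eq (by norm_num)] at hadj
  rw [abs_eq (by norm_num)] at hnot
  push_neg at hnot
  split_ifs at ha' hb' <;> omega

/-- Any swap protocol on a line of `n` qudits (one nearest-neighbour swap per step)
that makes every pair of distinct tokens adjacent at some time `t ≤ T` requires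
`2T ≥ n(n-1)/2 - (n-1)` swaps. -/
theorem line_swap_count_lower_bound (n T : ℕ) (hn : 2 ≤ n)
    (π : ℕ → Equiv.Perm (Fin n)) (h0 : π 0 = 1)
    (hstep : ∀ t < T, ∃ i : ℕ, ∃ h : i + 1 < n,
      π (t + 1) = Equiv.swap (⟨i, Nat.lt_of_succ_lt h⟩ : Fin n) ⟨i + 1, h⟩ * π t)
    (hall : ∀ x y : Fin n, x ≠ y →
      ∃ t ≤ T, |(((π t x : Fin n) : ℕ) : ℤ) - (((π t y : Fin n) : ℕ) : ℤ)| = 1) :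
    n * (n - 1) / 2 - (n - 1) ≤ 2 * T := by
  classical
  set S : Finset (Fin n × Fin n) := Finset.univ.offDiag with hSdef
  have hmemS : ∀ p : Fin n × Fin n, p ∈ S ↔ p.1 ≠ p.2 := by
    intro p; simp [hSdef, Finset.mem_offDiag]
  set A : ℕ → (Fin n × Fin n) → Prop :=
    fun t p => |(((π t p.1 : Fin n) : ℕ) : ℤ) - (((π t p.2 : Fin n) : ℕ) : ℤ)| = 1 with hAdef
  set f : (Fin n × Fin n) → ℕ := fun p => sInf {t | A t p} with hfdef
  have hex : ∀ p : Fin n × Fin n, p.1 ≠ p.2 → ∃ t, t ∈ {t | A t p} ∧ t ≤ T := by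
    intro p hp
    obtain ⟨t, ht, h⟩ := hall p.1 p.2 hp
    exact ⟨t, h, ht⟩
  have hfT : ∀ p : Fin n × Fin n, p.1 ≠ p.2 → f p ≤ T := by
    intro p hp; obtain ⟨t, ht, hle⟩ := hex p hp
    exact le_trans (Nat.sInf_le ht) hle
  have hfA : ∀ p : Fin n × Fin n, p.1 ≠ p.2 → A (f p) p := by
    intro p hp; obtain ⟨t, ht, _⟩ := hex p hp
    exact Nat.sInf_mem ⟨t, ht⟩
  have hfmin : ∀ p t, t < f p → ¬ A t p := fun p t ht => Nat.notMem_of_lt_sInf ht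
  set J : ℕ → ℕ := fun t => if h : t < T then (hstep t h).choose else 0 with hJdef
  have hJspec : ∀ t, ∀ h : t < T, ∃ hb : J t + 1 < n,
      π (t+1) = Equiv.swap (⟨J t, Nat.lt_of_succ_lt hb⟩ : Fin n) ⟨J t + 1, hb⟩ * π t := by
    intro t h
    simp only [hJdef, dif_pos h]
    exact (hstep t h).choose_spec
  set g : (Fin n × Fin n) → ℕ × ℕ :=
    fun p => (f p, min ((π (f p) p.1 : Fin n) : ℕ) ((π (f p) p.2 : Fin n) : ℕ)) with hgdef
  set B : Finset (ℕ × ℕ) :=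
    ({0} ×ˢ Finset.range (n-1)) ∪
      (Finset.range T).biUnion (fun t => {(t+1, J t - 1), (t+1, J t + 1)}) with hBdef
  -- image of g lands in B
  have himg : ∀ p ∈ S, g p ∈ B := by
    intro p hp
    rw [hmemS] at hp
    have hA := hfA p hp
    rcases hft : f p with _ | t
    · -- first adjacent at time 0
      rw [hft] at hA
      simp only [hAdef, h0, Equiv.Perm.coe_one, id_eq] at hA
      rw [abs_eq (by norm_num)] at hA
      have h1 : (p.1 : ℕ) < n := p.1.isLt
      have h2 : (p.2 : ℕ) < n := p.2.isLt
      have : min ((p.1 : ℕ)) ((p.2 : ℕ)) < n - 1 := by omega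
      simp only [hBdef, Finset.mem_union]
      left
      simp only [hgdef, hft, h0, Equiv.Perm.coe_one, id_eq, Finset.mem_product,
        Finset.mem_singleton, Finset.mem_range]
      exact ⟨by trivial, this⟩
    · -- first adjacent at time t+1
      have htT : t < T := by have := hfT p hp; omega
      obtain ⟨hb, heq⟩ := hJspec t htT
      have hnot : ¬ A t p := hfmin p t (by omega)
      rw [hft] at hA
      set u : Fin n := ⟨J t, Nat.lt_of_succ_lt hb⟩
      set v : Fin n := ⟨J t + 1, hb⟩
      have key : ∀ z : Fin n, ((π t z : Fin n) : ℕ) =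
          if ((π (t+1) z : Fin n) : ℕ) = J t then J t + 1
          else if ((π (t+1) z : Fin n) : ℕ) = J t + 1 then J t
          else ((π (t+1) z : Fin n) : ℕ) := by
        intro z
        have h1 : π t z = Equiv.swap u v (π (t+1) z) := by
          rw [heq]; simp [Equiv.Perm.mul_apply, Equiv.swap_apply_self]
        rw [h1, Equiv.swap_apply_def]
        simp only [Fin.ext_iff]
        split_ifs <;> rfl
      have harith := swap_arith (J t) ((π (t+1) p.1 : Fin n) : ℕ) ((π (t+1) p.2 : Fin n) : ℕ)
        ((π t p.1 : Fin n) : ℕ) ((π t p.2 : Fin n) : ℕ) (key p.1) (key p.2) hA hnot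
      simp only [hBdef, Finset.mem_union]
      right
      rw [Finset.mem_biUnion]
      refine ⟨t, Finset.mem_range.mpr htT, ?_⟩
      simp only [Finset.mem_insert, Finset.mem_singleton, hgdef, hft, Prod.mk.injEq]
      rcases harith with h | h
      · left; exact ⟨by trivial, by omega⟩
      · right; exact ⟨by trivial, by omega⟩
  -- fibers of g have size ≤ 2
  have hfiber : ∀ a ∈ S.image g, (S.filter fun p => g p = a).card ≤ 2 := by
    intro a ha
    obtain ⟨p₀, hp₀S, hp₀⟩ := Finset.mem_image.mp ha
    have hsub : (S.filter fun p => g p = a) ⊆ {p₀, (p₀.2, p₀.1)} := by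
      intro p hp
      rw [Finset.mem_filter] at hp
      obtain ⟨hpS, hpa⟩ := hp
      rw [← hp₀] at hpa
      have hp1 := (hmemS p).mp hpS
      have hp2 := (hmemS p₀).mp hp₀S
      have hAp := hfA p hp1
      have hAp₀ := hfA p₀ hp2
      simp only [hgdef, Prod.mk.injEq] at hpa
      obtain ⟨hft, hmin⟩ := hpa
      rw [hft] at hAp hmin
      set t := f p₀
      simp only [hAdef] at hAp hAp₀
      rw [abs_eq (by norm_num)] at hAp
      rw [abs_eq (by norm_num)] at hAp₀
      have hcases : ((π t p.1 : Fin n) : ℕ) = ((π t p₀.1 : Fin n) : ℕ) ∧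
            ((π t p.2 : Fin n) : ℕ) = ((π t p₀.2 : Fin n) : ℕ) ∨
          ((π t p.1 : Fin n) : ℕ) = ((π t p₀.2 : Fin n) : ℕ) ∧
            ((π t p.2 : Fin n) : ℕ) = ((π t p₀.1 : Fin n) : ℕ) := by omega
      simp only [Finset.mem_insert, Finset.mem_singleton]
      rcases hcases with ⟨h1, h2⟩ | ⟨h1, h2⟩
      · left
        have e1 : p.1 = p₀.1 := (π t).injective (Fin.ext h1)
        have e2 : p.2 = p₀.2 := (π t).injective (Fin.ext h2)
        exact Prod.ext e1 e2
      · right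
        have e1 : p.1 = p₀.2 := (π t).injective (Fin.ext h1)
        have e2 : p.2 = p₀.1 := (π t).injective (Fin.ext h2)
        exact Prod.ext e1 e2
    calc (S.filter fun p => g p = a).card ≤ ({p₀, (p₀.2, p₀.1)} : Finset _).card :=
          Finset.card_le_card hsub
      _ ≤ 2 := Finset.card_insert_le _ _ |>.trans (by simp)
  have hcard1 : S.card ≤ 2 * (S.image g).card :=
    Finset.card_le_mul_card_image S 2 hfiber
  have hcard2 : (S.image g).card ≤ B.card :=
    Finset.card_le_card (fun a ha => by
      obtain ⟨p, hpS, hpa⟩ := Finset.mem_image.mp ha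
      exact hpa ▸ himg p hpS)
  have hBcard : B.card ≤ (n - 1) + 2 * T := by
    refine le_trans (Finset.card_union_le _ _) ?_
    have h1 : (({0} : Finset ℕ) ×ˢ Finset.range (n-1)).card = n - 1 := by
      simp [Finset.card_product]
    have h2 : ((Finset.range T).biUnion
        (fun t => ({(t+1, J t - 1), (t+1, J t + 1)} : Finset (ℕ × ℕ)))).card ≤ 2 * T := by
      refine le_trans (Finset.card_biUnion_le) ?_
      calc ∑ t ∈ Finset.range T, ({(t+1, J t - 1), (t+1, J t + 1)} : Finset (ℕ × ℕ)).card
          ≤ ∑ _t ∈ Finset.range T, 2 :=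
            Finset.sum_le_sum (fun t _ => Finset.card_insert_le _ _ |>.trans (by simp))
        _ = 2 * T := by simp [Nat.mul_comm]
    omega
  have hScard : S.card = n * n - n := by
    simp [hSdef, Finset.offDiag_card]
  have hmul : n * (n - 1) = n * n - n := by
    cases n with
    | zero => simp
    | succ m => simp [Nat.succ_sub_one, Nat.mul_succ, Nat.succ_mul]
  have hfinal : n * (n - 1) ≤ 2 * ((n - 1) + 2 * T) := by
    rw [hmul, ← hScard]
    exact le_trans hcard1 (by omega)
  omega
end

section
/- Let n ≥ 2 and let π₀ = id, π₁, …, π_L be permutations of Fin n such that for each t < L the permutation π_{t+1} ∘ π_t⁻¹ is a product of pairwise-disjoint transpositions of adjacent positions (each step is one layer of parallel nearest-neighbour swaps). If for every pair of distinct tokens x ≠ y there exists some t ≤ L with |(π_t x : ℤ) − (π_t y : ℤ)| = 1, then 2·(L + 1) ≥ n, i.e. L ≥ n/2 − 1. (Any layered swap protocol on a line of n qudits enabling all-to-all interactions requires at least n/2 − 1 layers of swaps.) -/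
/-- Any layered swap protocol on a line of `n` qudits (each layer a product of
pairwise-disjoint nearest-neighbour transpositions, encoded as an involution moving
every position by at most one) that makes every pair of distinct tokens adjacent at
some time `t ≤ L` requires `2(L+1) ≥ n`, i.e. at least `n/2 - 1` layers. -/
theorem line_swap_layers_lower_bound (n L : ℕ) (hn : 2 ≤ n)
    (π : ℕ → Equiv.Perm (Fin n)) (h0 : π 0 = 1)
    (hstep : ∀ t < L,
      (π (t + 1) * (π t)⁻¹) * (π (t + 1) * (π t)⁻¹) = 1 ∧
      ∀ p : Fin n,
        |((((π (t + 1) * (π t)⁻¹) p : Fin n) : ℕ) : ℤ) - ((p : ℕ) : ℤ)| ≤ 1)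
    (hall : ∀ x y : Fin n, x ≠ y →
      ∃ t ≤ L, |(((π t x : Fin n) : ℕ) : ℤ) - (((π t y : Fin n) : ℕ) : ℤ)| = 1) :
    n ≤ 2 * (L + 1) := by
  classical
  set S := (Finset.univ : Finset (Fin n)).offDiag with hS
  have key : ∀ p ∈ S, ∃ t, t ≤ L ∧
      |(((π t p.1 : Fin n) : ℕ) : ℤ) - (((π t p.2 : Fin n) : ℕ) : ℤ)| = 1 := by
    intro p hp
    obtain ⟨t, ht, h⟩ := hall p.1 p.2 (Finset.mem_offDiag.mp hp).2.2
    exact ⟨t, ht, h⟩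
  choose! t ht habs using key
  set f : Fin n × Fin n → ℕ × ℕ × Bool := fun p =>
    (t p, ((π (t p) p.1 : Fin n) : ℕ) ⊓ ((π (t p) p.2 : Fin n) : ℕ),
      decide (((π (t p) p.1 : Fin n) : ℕ) < ((π (t p) p.2 : Fin n) : ℕ))) with hf
  set T : Finset (ℕ × ℕ × Bool) :=
    Finset.range (L + 1) ×ˢ Finset.range (n - 1) ×ˢ (Finset.univ : Finset Bool) with hT
  have hmem : ∀ p ∈ S, f p ∈ T := by
    intro p hp
    have h1 := ht p hp
    have h2 := habs p hp
    have ha : ((π (t p) p.1 : Fin n) : ℕ) < n := (π (t p) p.1).isLt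
    have hb : ((π (t p) p.2 : Fin n) : ℕ) < n := (π (t p) p.2).isLt
    simp only [hT, hf, Finset.mem_product, Finset.mem_range, Finset.mem_univ, and_true]
    constructor
    · omega
    · rcases abs_eq (by norm_num : (0:ℤ) ≤ 1) |>.mp h2 with h | h <;>
        omega
  have hinj : Set.InjOn f S := by
    intro p hp q hq hpq
    have h2p := habs p hp
    have h2q := habs q hq
    have he1 : t p = t q := congrArg Prod.fst hpq
    have he2 := congrArg (fun z => z.2.1) hpq
    have he3 := congrArg (fun z => z.2.2) hpq
    simp only [hf] at he2 he3
    rw [decide_eq_decide] at he3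
    set τ := t p with hτ
    rw [← he1] at h2q he2 he3
    set a1 := ((π τ p.1 : Fin n) : ℕ)
    set b1 := ((π τ p.2 : Fin n) : ℕ)
    set a2 := ((π τ q.1 : Fin n) : ℕ)
    set b2 := ((π τ q.2 : Fin n) : ℕ)
    have hab1 : a1 = b1 + 1 ∨ b1 = a1 + 1 := by
      rcases abs_eq (by norm_num : (0:ℤ) ≤ 1) |>.mp h2p with h | h <;> omega
    have hab2 : a2 = b2 + 1 ∨ b2 = a2 + 1 := by
      rcases abs_eq (by norm_num : (0:ℤ) ≤ 1) |>.mp h2q with h | h <;> omega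
    have ha : a1 = a2 ∧ b1 = b2 := by omega
    have h1 : π τ p.1 = π τ q.1 := Fin.ext ha.1
    have h2 : π τ p.2 = π τ q.2 := Fin.ext ha.2
    exact Prod.ext ((π τ).injective h1) ((π τ).injective h2)
  have hcard : S.card ≤ T.card := Finset.card_le_card_of_injOn f hmem hinj
  have hSc : S.card = n * n - n := by
    simp [hS, Finset.offDiag_card]
  have hTc : T.card = (L + 1) * ((n - 1) * 2) := by
    simp [hT]
  rw [hSc, hTc] at hcard
  have h1 : n * (n - 1) ≤ (2 * (L + 1)) * (n - 1) := by
    have e1 : n * (n - 1) = n * n - n := by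
      cases n with
      | zero => simp
      | succ m => simp [Nat.mul_sub, Nat.succ_sub_one]; ring_nf; omega
    have e2 : (2 * (L + 1)) * (n - 1) = (L + 1) * ((n - 1) * 2) := by ring
    omega
  exact Nat.le_of_mul_le_mul_right h1 (by omega)
end

section
/- Let d ≥ 1 and γ ∈ ℝ. For each ℓ ∈ Fin d define the diagonal d²×d² matrices D¹_ℓ and D²_ℓ, indexed by Fin d × Fin d, by: the (a,b) diagonal entry of D¹_ℓ is e^{iγ/2} if a = ℓ and b ≠ ℓ, and 1 otherwise; the (a,b) diagonal entry of D²_ℓ is e^{iγ/2} if b = ℓ and a ≠ ℓ, and 1 otherwise. Then the product ∏_{ℓ=0}^{d−1} D¹_ℓ D²_ℓ is the diagonal matrix whose (a,b) diagonal entry is e^{iγ} if a ≠ b and 1 if a = b. (The manifestly symmetric construction CP(γ) = ∏_ℓ 𝒰^{(1|2)}_ℓ 𝒰^{(2|1)}_ℓ realizes the two-qudit controlled-phase gate, up to a global phase e^{iγ}.) -/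
open Complex

/-- The diagonal two-qudit unitary `𝒰^{(1|2)}_ℓ`: it imprints the phase `e^{iγ/2}`
exactly on basis states `(a, b)` with target level `a = ℓ` and control level `b ≠ ℓ`. -/
noncomputable def Ugate1 (d : ℕ) (γ : ℝ) (ℓ : Fin d) :
    Matrix (Fin d × Fin d) (Fin d × Fin d) ℂ :=
  Matrix.diagonal fun p : Fin d × Fin d =>
    if p.1 = ℓ ∧ p.2 ≠ ℓ then Complex.exp (Complex.I * (γ / 2)) else 1

/-- The diagonal two-qudit unitary `𝒰^{(2|1)}_ℓ`: it imprints the phase `e^{iγ/2}`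
exactly on basis states `(a, b)` with `b = ℓ` and `a ≠ ℓ`. -/
noncomputable def Ugate2 (d : ℕ) (γ : ℝ) (ℓ : Fin d) :
    Matrix (Fin d × Fin d) (Fin d × Fin d) ℂ :=
  Matrix.diagonal fun p : Fin d × Fin d =>
    if p.2 = ℓ ∧ p.1 ≠ ℓ then Complex.exp (Complex.I * (γ / 2)) else 1

lemma list_prod_diagonal {n : Type*} [DecidableEq n] [Fintype n] {α : Type*}
    (l : List α) (f : α → n → ℂ) :
    ((l.map (fun ℓ => Matrix.diagonal (f ℓ))).prod : Matrix n n ℂ)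
      = Matrix.diagonal (fun p => (l.map (fun ℓ => f ℓ p)).prod) := by
  induction l with
  | nil => simp [Matrix.diagonal_one]
  | cons a t ih =>
      simp [ih, Matrix.diagonal_mul_diagonal]

/-- The manifestly symmetric construction `CP(γ) = ∏_{ℓ=0}^{d-1} 𝒰^{(1|2)}_ℓ 𝒰^{(2|1)}_ℓ`
realizes the two-qudit controlled-phase gate up to the global phase `e^{iγ}`: the
product is diagonal with entry `e^{iγ}` on unequal-level states and `1` on
equal-level states. -/
theorem controlled_phase_symmetric_construction (d : ℕ) (hd : 1 ≤ d) (γ : ℝ) :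
    ((List.finRange d).map (fun ℓ => Ugate1 d γ ℓ * Ugate2 d γ ℓ)).prod
      = Matrix.diagonal (fun p : Fin d × Fin d =>
          if p.1 ≠ p.2 then Complex.exp (Complex.I * γ) else 1) := by
  have key : ∀ ℓ : Fin d, Ugate1 d γ ℓ * Ugate2 d γ ℓ =
      Matrix.diagonal (fun p : Fin d × Fin d =>
        (if p.1 = ℓ ∧ p.2 ≠ ℓ then Complex.exp (Complex.I * (γ / 2)) else 1) *
        (if p.2 = ℓ ∧ p.1 ≠ ℓ then Complex.exp (Complex.I * (γ / 2)) else 1)) := by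
    intro ℓ
    simp [Ugate1, Ugate2, Matrix.diagonal_mul_diagonal]
  simp only [key]
  have := list_prod_diagonal (List.finRange d)
    (fun ℓ (p : Fin d × Fin d) =>
      (if p.1 = ℓ ∧ p.2 ≠ ℓ then Complex.exp (Complex.I * (γ / 2)) else 1) *
      (if p.2 = ℓ ∧ p.1 ≠ ℓ then Complex.exp (Complex.I * (γ / 2)) else 1))
  rw [this]
  refine congrArg Matrix.diagonal (funext fun p => ?_)
  obtain ⟨a, b⟩ := p
  clear this key
  rw [← List.prod_toFinset _ (List.nodup_finRange d)]
  have hfin : (List.finRange d).toFinset = Finset.univ := by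
    ext x; simp [List.mem_finRange]
  rw [hfin]
  by_cases hab : a = b
  · subst hab
    simp
  · have h1 : ∀ ℓ : Fin d,
        ((if a = ℓ ∧ b ≠ ℓ then Complex.exp (Complex.I * (γ / 2)) else 1) *
         (if b = ℓ ∧ a ≠ ℓ then Complex.exp (Complex.I * (γ / 2)) else 1))
        = (if ℓ = a then Complex.exp (Complex.I * (γ / 2)) else 1) *
          (if ℓ = b then Complex.exp (Complex.I * (γ / 2)) else 1) := by
      intro ℓ
      by_cases h1 : ℓ = a <;> by_cases h2 : ℓ = b <;>
        simp [h1, h2, hab, eq_comm, Ne.symm]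
    simp only [h1]
    rw [Finset.prod_mul_distrib, Finset.prod_ite_eq', Finset.prod_ite_eq']
    simp [hab, ← Complex.exp_add]
    ring_nf
end

section
/- Let d ≥ 2. For each ℓ ∈ {0, 1, …, d−2} define g_ℓ : Fin d × Fin d → Fin d × Fin d by g_ℓ(a, b) = (σ_ℓ a, b) if b ≠ ℓ and g_ℓ(a, b) = (a, b) if b = ℓ, where σ_ℓ is the transposition of Fin d exchanging ℓ and ℓ+1. Let G = g_0 ∘ g_1 ∘ ⋯ ∘ g_{d−2}. Then for all (a, b) ∈ Fin d × Fin d, the first component of G(a, b) equals 0 if and only if a = b. (This is the combinatorial core of the controlled-phase construction CP(γ) = [∏_ℓ CX^{(1|2)}_{ℓ,ℓ+1|¬ℓ}]† P^{(1)}_{aux,0}(γ) [∏_ℓ CX^{(1|2)}_{ℓ,ℓ+1|¬ℓ}]: the ladder of negated-control CX gates maps exactly the equal-level basis states |ℓ⟩|ℓ⟩ onto states whose target qudit is in level 0, so that a single phase gate on level 0 of the target imprints the phase precisely on equal-level states.) -/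
/-- The combinatorial core of the controlled-phase construction
`CP(γ) = [∏_ℓ CX^{(1|2)}_{ℓ,ℓ+1|¬ℓ}]† P^{(1)}_{aux,0}(γ) [∏_ℓ CX^{(1|2)}_{ℓ,ℓ+1|¬ℓ}]`:
the ladder `G = g_0 ∘ g_1 ∘ ⋯ ∘ g_{d-2}` of negated-control CX maps (where `g_ℓ`
swaps target levels `ℓ` and `ℓ+1` when the control level differs from `ℓ`) sends a
basis label `(a, b)` to one with target level `0` if and only if `a = b`. -/
theorem CX_ladder_maps_equal_levels_to_zero (d : ℕ) (hd : 2 ≤ d)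
    (g : ℕ → Fin d × Fin d → Fin d × Fin d)
    (hg : ∀ (ℓ : ℕ) (h : ℓ + 1 < d) (p : Fin d × Fin d),
      g ℓ p =
        if p.2 = (⟨ℓ, Nat.lt_of_succ_lt h⟩ : Fin d) then p
        else (Equiv.swap (⟨ℓ, Nat.lt_of_succ_lt h⟩ : Fin d) ⟨ℓ + 1, h⟩ p.1, p.2)) :
    ∀ p : Fin d × Fin d,
      (((List.range (d - 1)).foldr (fun ℓ acc => g ℓ ∘ acc) id) p).1
          = (⟨0, by omega⟩ : Fin d)
        ↔ p.1 = p.2 := by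
  have hfold : ∀ (l : List ℕ) (b : Fin d × Fin d → Fin d × Fin d) (p : Fin d × Fin d),
      (l.foldr (fun ℓ acc => g ℓ ∘ acc) b) p
        = (l.foldr (fun ℓ acc => g ℓ ∘ acc) id) (b p) := by
    intro l
    induction l with
    | nil => intro b p; rfl
    | cons x xs ih => intro b p; simp [Function.comp, ih]
  set F : ℕ → Fin d × Fin d → Fin d × Fin d :=
    fun n => (List.range n).foldr (fun ℓ acc => g ℓ ∘ acc) id with hF
  have key : ∀ n, n ≤ d - 1 → ∀ p : Fin d × Fin d,
      ((F n p).1 : ℕ) =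
        (if n < (p.1 : ℕ) then (p.1 : ℕ)
          else if (p.1 : ℕ) = (p.2 : ℕ) ∨ ((p.1 : ℕ) = n ∧ n ≤ (p.2 : ℕ)) then 0
          else if (p.1 : ℕ) = n then (p.2 : ℕ) + 1 else (p.1 : ℕ) + 1) := by
    intro n
    induction n with
    | zero =>
      intro _ p
      have : F 0 p = p := rfl
      rw [this]
      have hb : (p.2 : ℕ) ≥ 0 := Nat.zero_le _
      split_ifs <;> omega
    | succ n ih =>
      intro hn p
      have hn' : n ≤ d - 1 := by omega
      have h2 : n + 1 < d := by omega
      have hstep : F (n + 1) p = F n (g n p) := by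
        rw [hF]
        simp only [List.range_succ, List.foldr_append, List.foldr_cons, List.foldr_nil]
        rw [hfold]
        rfl
      rw [hstep, hg n h2 p]
      by_cases hb : p.2 = (⟨n, Nat.lt_of_succ_lt h2⟩ : Fin d)
      · rw [if_pos hb]
        rw [ih hn' p]
        have hbv : (p.2 : ℕ) = n := by rw [hb]
        have ha : (p.1 : ℕ) < d := p.1.isLt
        split_ifs <;> omega
      · rw [if_neg hb]
        have hbv : (p.2 : ℕ) ≠ n := by
          intro h
          exact hb (Fin.ext h)
        have ha : (p.1 : ℕ) < d := p.1.isLt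
        have hbd : (p.2 : ℕ) < d := p.2.isLt
        have hswap : ((Equiv.swap (⟨n, Nat.lt_of_succ_lt h2⟩ : Fin d) ⟨n + 1, h2⟩ p.1) : ℕ)
            = if (p.1 : ℕ) = n then n + 1 else if (p.1 : ℕ) = n + 1 then n else (p.1 : ℕ) := by
          by_cases h1 : p.1 = (⟨n, Nat.lt_of_succ_lt h2⟩ : Fin d)
          · rw [h1, Equiv.swap_apply_left]
            have : ((⟨n, Nat.lt_of_succ_lt h2⟩ : Fin d) : ℕ) = n := rfl
            simp [this]
          · by_cases h1' : p.1 = (⟨n + 1, h2⟩ : Fin d)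
            · rw [h1', Equiv.swap_apply_right]
              have hv : ((⟨n + 1, h2⟩ : Fin d) : ℕ) = n + 1 := rfl
              have hne : (n : ℕ) + 1 ≠ n := by omega
              simp [hv, hne]
            · rw [Equiv.swap_apply_of_ne_of_ne h1 h1']
              have hv1 : (p.1 : ℕ) ≠ n := fun h => h1 (Fin.ext h)
              have hv2 : (p.1 : ℕ) ≠ n + 1 := fun h => h1' (Fin.ext h)
              simp [hv1, hv2]
        rw [ih hn' (Equiv.swap (⟨n, Nat.lt_of_succ_lt h2⟩ : Fin d) ⟨n + 1, h2⟩ p.1, p.2)]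
        simp only [hswap]
        split_ifs <;> omega
  intro p
  have h := key (d - 1) le_rfl p
  have ha : (p.1 : ℕ) < d := p.1.isLt
  have hbd : (p.2 : ℕ) < d := p.2.isLt
  constructor
  · intro h0
    have hv : ((F (d - 1) p).1 : ℕ) = 0 := by rw [h0]
    rw [h] at hv
    apply Fin.ext
    split_ifs at hv <;> omega
  · intro hab
    apply Fin.ext
    show ((F (d - 1) p).1 : ℕ) = 0
    rw [h]
    have : (p.1 : ℕ) = (p.2 : ℕ) := by rw [hab]
    split_ifs <;> omega
end

section
/- Let Ω₀, Ω₁ ∈ ℂ, not both zero, set Ω = √(|Ω₀|² + |Ω₁|²), a = (|Ω₀|² − |Ω₁|²)/Ω², b = 2 Ω₀ (conj Ω₁)/Ω², and let H be the 3×3 complex matrix !![0, 0, Ω₀; 0, 0, Ω₁; conj Ω₀, conj Ω₁, 0]. Then for every positive integer m and t = (2m − 1)π/Ω, the matrix exponential satisfies exp(−(i t) • H) = −!![a, b, 0; conj b, −a, 0; 0, 0, 1]. (For a resonantly driven Λ-system with both legs coupled to a common Rydberg state, pulses of duration t = π(2m−1)/Ω return all population from the Rydberg state and implement the unitary U^{3-level}(θ,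 φ) with cos(θ/2) = (|Ω₀|²−|Ω₁|²)/Ω² and sin(θ/2)e^{iφ} = 2Ω₀Ω₁*/Ω².) -/
set_option linter.unreachableTactic false
set_option linter.unusedTactic false


set_option maxHeartbeats 1000000 in
lemma lambda_aux (u v u' v' c z : ℂ) (hc : c ≠ 0)
    (hc2 : c ^ 2 = u * u' + v * v')
    (hz : Complex.exp (z * c) = -1) :
    NormedSpace.exp (z • (!![0, 0, u; 0, 0, v; u', v', 0] : Matrix (Fin 3) (Fin 3) ℂ))
      = !![(v * v' - u * u') / c ^ 2, -(2 * u * v' / c ^ 2), 0;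
           -(2 * u' * v / c ^ 2), (u * u' - v * v') / c ^ 2, 0;
           0, 0, -1] := by
  have hz' : Complex.exp (-(z * c)) = -1 := by
    rw [Complex.exp_neg, hz]; norm_num
  set P : Matrix (Fin 3) (Fin 3) ℂ := !![u, u, v'; v, v, -u'; c, -c, 0] with hP
  set Q : Matrix (Fin 3) (Fin 3) ℂ :=
    !![u' / (2 * c ^ 2), v' / (2 * c ^ 2), 1 / (2 * c);
       u' / (2 * c ^ 2), v' / (2 * c ^ 2), -(1 / (2 * c));
       v / c ^ 2, -u / c ^ 2, 0] with hQ
  have hPQ : P * Q = 1 := by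
    rw [hP, hQ, Matrix.mul_fin_three, Matrix.one_fin_three]
    ext i j
    fin_cases i <;> fin_cases j <;>
      (try simp [Matrix.vecHead, Matrix.vecTail]) <;>
      (try field_simp) <;>
      first
        | ring1
        | linear_combination hc2
        | linear_combination -hc2
        | linear_combination 2*hc2
        | linear_combination (-2)*hc2
        | linear_combination c*hc2
        | linear_combination (-c)*hc2
        | linear_combination 2*c*hc2
        | linear_combination (-2*c)*hc2
        | linear_combination (2*c-2*c^2)*hc2
        | linear_combination (2*c^2-2*c)*hc2
        | linear_combination (2*c-4*c^2)*hc2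
        | linear_combination (4*c^2-2*c)*hc2
        | linear_combination (2*c^2)*hc2
        | linear_combination (-2*c^2)*hc2
  have hQP : Q * P = 1 := by
    rw [hP, hQ, Matrix.mul_fin_three, Matrix.one_fin_three]
    ext i j
    fin_cases i <;> fin_cases j <;>
      (try simp [Matrix.vecHead, Matrix.vecTail]) <;>
      (try field_simp) <;>
      first
        | ring1
        | linear_combination hc2
        | linear_combination -hc2
        | linear_combination 2*hc2
        | linear_combination (-2)*hc2
        | linear_combination c*hc2
        | linear_combination (-c)*hc2
        | linear_combination 2*c*hc2
        | linear_combination (-2*c)*hc2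
        | linear_combination (2*c-2*c^2)*hc2
        | linear_combination (2*c^2-2*c)*hc2
        | linear_combination (2*c-4*c^2)*hc2
        | linear_combination (4*c^2-2*c)*hc2
        | linear_combination (2*c^2)*hc2
        | linear_combination (-2*c^2)*hc2
  set D : Matrix (Fin 3) (Fin 3) ℂ := Matrix.diagonal ![z * c, -(z * c), 0] with hD
  have hDlit : D = !![z * c, 0, 0; 0, -(z * c), 0; 0, 0, 0] := by
    rw [hD]
    ext i j
    fin_cases i <;> fin_cases j <;> simp [Matrix.diagonal, Matrix.vecHead, Matrix.vecTail]
  have hA' : (z • (!![0, 0, u; 0, 0, v; u', v', 0] : Matrix (Fin 3) (Fin 3) ℂ)) * P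
      = P * !![z * c, 0, 0; 0, -(z * c), 0; 0, 0, 0] := by
    rw [Matrix.smul_mul, hP, Matrix.mul_fin_three, Matrix.mul_fin_three]
    ext i j
    fin_cases i <;> fin_cases j <;>
      simp [Matrix.smul_apply, Matrix.vecHead, Matrix.vecTail] <;>
      first
        | ring1
        | linear_combination z*hc2
        | linear_combination (-z)*hc2
        | exact Or.inr (by ring)
  have hA : z • (!![0, 0, u; 0, 0, v; u', v', 0] : Matrix (Fin 3) (Fin 3) ℂ)
      = P * D * Q := by
    calc z • (!![0, 0, u; 0, 0, v; u', v', 0] : Matrix (Fin 3) (Fin 3) ℂ)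
        = (z • (!![0, 0, u; 0, 0, v; u', v', 0] : Matrix (Fin 3) (Fin 3) ℂ)) * (P * Q) := by
          rw [hPQ, mul_one]
      _ = ((z • (!![0, 0, u; 0, 0, v; u', v', 0] : Matrix (Fin 3) (Fin 3) ℂ)) * P) * Q := by
          rw [mul_assoc]
      _ = P * D * Q := by rw [hA', hDlit]
  have hexpD : NormedSpace.exp D = !![(-1 : ℂ), 0, 0; 0, -1, 0; 0, 0, 1] := by
    rw [hD, Matrix.exp_diagonal]
    ext i j
    fin_cases i <;> fin_cases j <;>
      simp [Matrix.diagonal, Matrix.vecHead, Matrix.vecTail, Pi.exp_def,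
        ← Complex.exp_eq_exp_ℂ, hz, hz', Complex.exp_zero]
  have hc2ne : (c ^ 2 : ℂ) ≠ 0 := pow_ne_zero 2 hc
  set N : Matrix (Fin 3) (Fin 3) ℂ :=
    !![v * v' - u * u', -(2 * u * v'), 0;
       -(2 * u' * v), u * u' - v * v', 0;
       0, 0, -(c ^ 2)] with hN
  have hsc : (!![(v * v' - u * u') / c ^ 2, -(2 * u * v' / c ^ 2), 0;
           -(2 * u' * v / c ^ 2), (u * u' - v * v') / c ^ 2, 0;
           0, 0, -1] : Matrix (Fin 3) (Fin 3) ℂ) = (c ^ 2)⁻¹ • N := by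
    rw [hN]
    ext i j
    fin_cases i <;> fin_cases j <;>
      simp [Matrix.smul_apply, Matrix.vecHead, Matrix.vecTail] <;>
      field_simp
  have hfinN : N * P = c ^ 2 • (P * !![(-1 : ℂ), 0, 0; 0, -1, 0; 0, 0, 1]) := by
    rw [hN, hP, Matrix.mul_fin_three, Matrix.mul_fin_three]
    ext i j
    fin_cases i <;> fin_cases j <;>
      simp [Matrix.smul_apply, Matrix.vecHead, Matrix.vecTail] <;>
      first
        | ring1
        | linear_combination u*hc2
        | linear_combination (-u)*hc2
        | linear_combination v*hc2
        | linear_combination (-v)*hc2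
        | linear_combination u'*hc2
        | linear_combination (-u')*hc2
        | linear_combination v'*hc2
        | linear_combination (-v')*hc2
        | linear_combination c*hc2
        | linear_combination (-c)*hc2
  have hfin : (!![(v * v' - u * u') / c ^ 2, -(2 * u * v' / c ^ 2), 0;
           -(2 * u' * v / c ^ 2), (u * u' - v * v') / c ^ 2, 0;
           0, 0, -1] : Matrix (Fin 3) (Fin 3) ℂ) * P
      = P * !![(-1 : ℂ), 0, 0; 0, -1, 0; 0, 0, 1] := by
    rw [hsc, Matrix.smul_mul, hfinN, smul_smul, inv_mul_cancel₀ hc2ne, one_smul]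
  calc NormedSpace.exp (z • (!![0, 0, u; 0, 0, v; u', v', 0] : Matrix (Fin 3) (Fin 3) ℂ))
      = NormedSpace.exp (P * D * Q) := by rw [hA]
    _ = P * NormedSpace.exp D * Q := Matrix.exp_units_conj ⟨P, Q, hPQ, hQP⟩ D
    _ = _ := by
        rw [hexpD, ← hfin, mul_assoc, hPQ, mul_one]

set_option maxHeartbeats 1000000 in
/-- For a resonantly driven Λ-system with both legs coupled to a common Rydberg state
with Rabi frequencies `Ω₀, Ω₁` (not both zero), `Ω = √(|Ω₀|² + |Ω₁|²)`,
`a = (|Ω₀|² - |Ω₁|²)/Ω²`, `b = 2Ω₀Ω₁*/Ω²`, a pulse of duration `t = (2m-1)π/Ω`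
implements `exp(-itH) = -!![a, b, 0; conj b, -a, 0; 0, 0, 1]`. -/
theorem lambda_system_resonant_evolution (Ω₀ Ω₁ : ℂ) (hΩ : ¬(Ω₀ = 0 ∧ Ω₁ = 0))
    (Ω : ℝ) (hΩdef : Ω = Real.sqrt (‖Ω₀‖ ^ 2 + ‖Ω₁‖ ^ 2))
    (a : ℝ) (ha : a = (‖Ω₀‖ ^ 2 - ‖Ω₁‖ ^ 2) / Ω ^ 2)
    (b : ℂ) (hb : b = 2 * Ω₀ * (starRingEnd ℂ) Ω₁ / ((Ω : ℂ) ^ 2))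
    (m : ℕ) (hm : 1 ≤ m)
    (t : ℝ) (ht : t = (2 * (m : ℝ) - 1) * Real.pi / Ω) :
    NormedSpace.exp
        ((-(Complex.I * (t : ℂ))) •
          (!![0, 0, Ω₀; 0, 0, Ω₁; (starRingEnd ℂ) Ω₀, (starRingEnd ℂ) Ω₁, 0] :
            Matrix (Fin 3) (Fin 3) ℂ))
      = -!![(a : ℂ), b, 0; (starRingEnd ℂ) b, -(a : ℂ), 0; 0, 0, 1] := by
  have habs : 0 < ‖Ω₀‖ ^ 2 + ‖Ω₁‖ ^ 2 := by
    rcases not_and_or.mp hΩ with h | h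
    · have := norm_pos_iff.mpr h
      positivity
    · have := norm_pos_iff.mpr h
      positivity
  have hΩpos : 0 < Ω := hΩdef ▸ Real.sqrt_pos.2 habs
  have hΩne : Ω ≠ 0 := ne_of_gt hΩpos
  have hcne : (Ω : ℂ) ≠ 0 := Complex.ofReal_ne_zero.mpr hΩne
  have hΩsq : Ω ^ 2 = ‖Ω₀‖ ^ 2 + ‖Ω₁‖ ^ 2 := by
    rw [hΩdef]; exact Real.sq_sqrt habs.le
  have habs0 : ((‖Ω₀‖ : ℂ)) ^ 2 = Ω₀ * (starRingEnd ℂ) Ω₀ := by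
    rw [Complex.mul_conj, Complex.normSq_eq_norm_sq]; push_cast; ring
  have habs1 : ((‖Ω₁‖ : ℂ)) ^ 2 = Ω₁ * (starRingEnd ℂ) Ω₁ := by
    rw [Complex.mul_conj, Complex.normSq_eq_norm_sq]; push_cast; ring
  have hc2 : ((Ω : ℂ)) ^ 2 = Ω₀ * (starRingEnd ℂ) Ω₀ + Ω₁ * (starRingEnd ℂ) Ω₁ := by
    rw [← habs0, ← habs1, ← Complex.ofReal_pow, hΩsq]
    push_cast; ring
  have hodd : Odd ((2 * m - 1 : ℕ) : ℤ) := by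
    refine ⟨(m : ℤ) - 1, ?_⟩
    push_cast [Nat.cast_sub (by omega : 1 ≤ 2 * m)]
    ring
  have htΩ : (t : ℝ) * Ω = ((2 * m - 1 : ℕ) : ℝ) * Real.pi := by
    rw [ht]
    push_cast [Nat.cast_sub (by omega : 1 ≤ 2 * m)]
    field_simp
  have hz : Complex.exp ((-(Complex.I * (t : ℂ))) * (Ω : ℂ)) = -1 := by
    have harg : (-(Complex.I * (t : ℂ))) * (Ω : ℂ)
        = (-((2 * m - 1 : ℕ) : ℤ) : ℤ) * ((Real.pi : ℂ) * Complex.I) := by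
      rw [show -(Complex.I * (t : ℂ)) * (Ω : ℂ) = -(((t * Ω : ℝ) : ℂ) * Complex.I) by
        push_cast; ring, htΩ]
      push_cast; ring
    rw [harg, Complex.exp_int_mul, Complex.exp_pi_mul_I, zpow_neg,
      hodd.neg_one_zpow]
    norm_num
  rw [lambda_aux Ω₀ Ω₁ ((starRingEnd ℂ) Ω₀) ((starRingEnd ℂ) Ω₁) (Ω : ℂ)
    (-(Complex.I * (t : ℂ))) hcne hc2 hz]
  have hbconj : (starRingEnd ℂ) b = 2 * (starRingEnd ℂ) Ω₀ * Ω₁ / (Ω : ℂ) ^ 2 := by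
    rw [hb]
    rw [map_div₀, map_mul, map_mul, map_pow, Complex.conj_conj, Complex.conj_ofReal,
      map_ofNat]
  have haC : ((a : ℝ) : ℂ) = (Ω₀ * (starRingEnd ℂ) Ω₀ - Ω₁ * (starRingEnd ℂ) Ω₁)
      / (Ω : ℂ) ^ 2 := by
    rw [ha, ← habs0, ← habs1]
    push_cast
    ring
  rw [hbconj, haC, hb]
  ext i j
  fin_cases i <;> fin_cases j <;>
    simp [Matrix.neg_apply, Matrix.vecHead, Matrix.vecTail] <;>
    ring
end
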